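/- Let μ_σ and μ_ε be nonzero positive finite Borel measures on [0,1] satisfying the thermodynamical restriction (T) and forming a proper fractional model (i.e., μ_σ((0,1)) > 0 or μ_ε((0,1)) > 0). Then for every R > 0 and every θ ∈ [−π,π]: ∫₀¹ R^α e^{iαθ} dμ_σ(α) ≠ 0 and ∫₀¹ R^α e^{iαθ} dμ_ε(α) ≠ 0. (In particular Φ_σ and Φ_ε do not vanish on either side of the branch cut, so s = 0 and s = ∞ are the only possible branch points of √(Φ_σ/Φ_ε).) -/

import Mathlib

open MeasureTheory Complex Set

/-- `PhiP μ R θ = ∫₀¹ R^α e^{iαθ} dμ(α)` (polar form, including boundary values θ = ±π). -/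
noncomputable def PhiP (μ : Measure ℝ) (R θ : ℝ) : ℂ :=
  ∫ α in Set.Icc (0:ℝ) 1, ((R ^ α : ℝ) : ℂ) * Complex.exp ((α * θ : ℝ) * Complex.I) ∂μ

/-- The thermodynamical restriction (T). -/
def TDrestriction (μσ με : Measure ℝ) : Prop :=
  ∀ E : Set (ℝ × ℝ), MeasurableSet E →
    E ⊆ {p : ℝ × ℝ | p.2 < p.1 ∧ p.1 ∈ Set.Icc (0:ℝ) 1 ∧ p.2 ∈ Set.Icc (0:ℝ) 1} →
    (μσ.prod με) E ≤ (με.prod μσ) E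

lemma contPhi (R θ : ℝ) (hR : 0 < R) :
    Continuous (fun α : ℝ => ((R ^ α : ℝ) : ℂ) * Complex.exp ((α * θ : ℝ) * Complex.I)) := by
  have h1 : Continuous (fun α : ℝ => (R:ℝ) ^ α) := by
    have : (fun α : ℝ => (R:ℝ) ^ α) = fun α => Real.exp (Real.log R * α) := by
      funext α; rw [Real.rpow_def_of_pos hR]
    rw [this]; exact Real.continuous_exp.comp (continuous_const.mul continuous_id)
  exact (Complex.continuous_ofReal.comp h1).mul
    (Complex.continuous_exp.comp ((Complex.continuous_ofReal.comp
      (continuous_id.mul continuous_const)).mul continuous_const))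

lemma integPhi (μ : Measure ℝ) [IsFiniteMeasure μ] (R θ : ℝ) (hR : 0 < R) :
    IntegrableOn (fun α : ℝ => ((R ^ α : ℝ) : ℂ) * Complex.exp ((α * θ : ℝ) * Complex.I))
      (Set.Icc 0 1) μ :=
  (contPhi R θ hR).continuousOn.integrableOn_compact isCompact_Icc

lemma cos_aux_nonneg (α θ : ℝ) (hα : α ∈ Set.Icc (0:ℝ) 1)
    (hθ : θ ∈ Set.Icc (-Real.pi) Real.pi) : 0 ≤ Real.cos (α * θ - θ / 2) := by
  obtain ⟨hα0, hα1⟩ := hα; obtain ⟨hθ0, hθ1⟩ := hθ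
  apply Real.cos_nonneg_of_mem_Icc
  constructor
  · nlinarith [mul_nonneg hα0 (by linarith : (0:ℝ) ≤ Real.pi + θ),
      mul_nonneg (by linarith : (0:ℝ) ≤ 1 - α) (by linarith : (0:ℝ) ≤ Real.pi - θ)]
  · nlinarith [mul_nonneg hα0 (by linarith : (0:ℝ) ≤ Real.pi - θ),
      mul_nonneg (by linarith : (0:ℝ) ≤ 1 - α) (by linarith : (0:ℝ) ≤ Real.pi + θ)]

lemma cos_aux_pos (α θ : ℝ) (hα : α ∈ Set.Icc (0:ℝ) 1)
    (hθ : θ ∈ Set.Icc (-Real.pi) Real.pi)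
    (h : |θ| < Real.pi ∨ α ∈ Set.Ioo (0:ℝ) 1) : 0 < Real.cos (α * θ - θ / 2) := by
  obtain ⟨hα0, hα1⟩ := hα; obtain ⟨hθ0, hθ1⟩ := hθ
  have hπ := Real.pi_pos
  have h1 : |α * θ - θ / 2| = |α - 1/2| * |θ| := by
    rw [← abs_mul]; ring_nf
  have key : |α * θ - θ / 2| < Real.pi / 2 := by
    rw [h1]
    rcases h with h | h
    · have h2 : |α - 1/2| ≤ 1/2 := abs_le.mpr ⟨by linarith, by linarith⟩
      have h3 := mul_le_mul_of_nonneg_right h2 (abs_nonneg θ)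
      linarith
    · have h2 : |α - 1/2| < 1/2 := abs_lt.mpr ⟨by linarith [h.1], by linarith [h.2]⟩
      have h3 : |θ| ≤ Real.pi := abs_le.mpr ⟨by linarith, hθ1⟩
      have h4 := mul_le_mul_of_nonneg_left h3 (abs_nonneg (α - 1/2))
      have h5 := mul_lt_mul_of_pos_right h2 hπ
      linarith
  rw [abs_lt] at key
  exact Real.cos_pos_of_mem_Ioo ⟨by linarith [key.1], key.2⟩

lemma phiP_ne_zero_key (μ : Measure ℝ) [IsFiniteMeasure μ] (R θ : ℝ) (hR : 0 < R)
    (hθ : θ ∈ Set.Icc (-Real.pi) Real.pi)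
    (hpos : 0 < μ ({α | 0 < Real.cos (α * θ - θ / 2)} ∩ Set.Icc 0 1)) :
    PhiP μ R θ ≠ 0 := by
  intro h0
  set f : ℝ → ℂ := fun α => ((R ^ α : ℝ) : ℂ) * Complex.exp ((α * θ : ℝ) * Complex.I) with hf
  set g : ℝ → ℝ := fun α => R ^ α * Real.cos (α * θ - θ / 2) with hg
  have hre : ∀ α : ℝ, (f α * Complex.exp ((-(θ/2) : ℝ) * Complex.I)).re = g α := by
    intro α
    show ((((R ^ α : ℝ) : ℂ) * Complex.exp ((α * θ : ℝ) * Complex.I)) *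
      Complex.exp ((-(θ/2) : ℝ) * Complex.I)).re = g α
    rw [mul_assoc, ← Complex.exp_add]
    have h2 : ((α * θ : ℝ) : ℂ) * Complex.I + ((-(θ/2) : ℝ) : ℂ) * Complex.I
        = ((α * θ - θ/2 : ℝ) : ℂ) * Complex.I := by push_cast; ring
    rw [h2]
    simp only [Complex.mul_re, Complex.ofReal_re, Complex.ofReal_im,
      Complex.exp_ofReal_mul_I_re, zero_mul, sub_zero, hg]
  have hgc : Continuous g := by
    have h1 : Continuous (fun α : ℝ => (R:ℝ) ^ α) := by
      have : (fun α : ℝ => (R:ℝ) ^ α) = fun α => Real.exp (Real.log R * α) := by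
        funext α; rw [Real.rpow_def_of_pos hR]
      rw [this]; exact Real.continuous_exp.comp (continuous_const.mul continuous_id)
    exact h1.mul (Real.continuous_cos.comp (by fun_prop))
  have hgint : IntegrableOn g (Set.Icc 0 1) μ :=
    hgc.continuousOn.integrableOn_compact isCompact_Icc
  have hintf : IntegrableOn (fun α => f α * Complex.exp ((-(θ/2) : ℝ) * Complex.I))
      (Set.Icc 0 1) μ := (integPhi μ R θ hR).mul_const _
  have hIg : (0:ℝ) < ∫ α in Set.Icc (0:ℝ) 1, g α ∂μ := by
    rw [setIntegral_pos_iff_support_of_nonneg_ae ?_ hgint]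
    · refine hpos.trans_le (measure_mono ?_)
      rintro x ⟨hx1, hx2⟩
      refine ⟨?_, hx2⟩
      simp only [Function.mem_support, hg]
      exact (mul_pos (Real.rpow_pos_of_pos hR x) hx1).ne'
    · filter_upwards [ae_restrict_mem measurableSet_Icc] with α hα
      exact mul_nonneg (Real.rpow_pos_of_pos hR α).le (cos_aux_nonneg α θ hα hθ)
  have heq : ∫ α in Set.Icc (0:ℝ) 1, g α ∂μ
      = ((∫ α in Set.Icc (0:ℝ) 1, f α ∂μ) * Complex.exp ((-(θ/2) : ℝ) * Complex.I)).re := by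
    rw [← integral_mul_const]
    simp only [← RCLike.re_to_complex]
    rw [← _root_.integral_re hintf]
    simp only [RCLike.re_to_complex]
    exact setIntegral_congr_fun measurableSet_Icc fun α _ => (hre α).symm
  have hPhi : PhiP μ R θ = ∫ α in Set.Icc (0:ℝ) 1, f α ∂μ := rfl
  rw [heq, ← hPhi, h0, zero_mul, Complex.zero_re] at hIg
  exact lt_irrefl 0 hIg

lemma phiP_boundary (μ : Measure ℝ) [IsFiniteMeasure μ]
    (R θ : ℝ) (hR : 0 < R) (hθ : θ = Real.pi ∨ θ = -Real.pi)
    (hIoo : μ (Set.Ioo (0:ℝ) 1) = 0) :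
    PhiP μ R θ = (((μ {0}).toReal - (μ {1}).toReal * R : ℝ) : ℂ) := by
  have hset : (Set.Icc (0:ℝ) 1 : Set ℝ) =ᵐ[μ] (({0} ∪ {1} : Set ℝ)) := by
    rw [MeasureTheory.ae_eq_set]
    constructor
    · refine measure_mono_null ?_ hIoo
      rintro x ⟨⟨h0, h1⟩, hx⟩
      simp only [Set.mem_union, Set.mem_singleton_iff, not_or] at hx
      exact ⟨lt_of_le_of_ne h0 (Ne.symm hx.1), lt_of_le_of_ne h1 hx.2⟩
    · have : (({0} ∪ {1} : Set ℝ)) \ Set.Icc 0 1 = ∅ := by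
        apply Set.diff_eq_empty.mpr
        rintro x (hx | hx) <;> simp_all
      rw [this]; exact measure_empty
  set f : ℝ → ℂ := fun α => ((R ^ α : ℝ) : ℂ) * Complex.exp ((α * θ : ℝ) * Complex.I) with hf
  have hPhi : PhiP μ R θ = ∫ α in ({0} ∪ {1} : Set ℝ), f α ∂μ :=
    setIntegral_congr_set hset
  have hdisj : Disjoint ({0} : Set ℝ) {1} := by
    simp [Set.disjoint_singleton]
  have hint0 : IntegrableOn f ({0} : Set ℝ) μ :=
    (integPhi μ R θ hR).mono_set (by norm_num)
  have hint1 : IntegrableOn f ({1} : Set ℝ) μ :=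
    (integPhi μ R θ hR).mono_set (by norm_num)
  have hsing : ∀ a : ℝ, ∫ α in ({a} : Set ℝ), f α ∂μ = (μ {a}).toReal • f a := by
    intro a
    rw [Measure.restrict_singleton, integral_smul_measure, integral_dirac]
  have hval0 : f 0 = 1 := by
    simp [hf, Real.rpow_zero]
  have hval1 : f 1 = -R := by
    have hexp : Complex.exp ((θ : ℂ) * Complex.I) = -1 := by
      rcases hθ with h | h <;> subst h
      · push_cast
        exact Complex.exp_pi_mul_I
      · push_cast
        rw [show ((-(Real.pi:ℂ)) * Complex.I) = -(Real.pi * Complex.I) by ring,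
          Complex.exp_neg, Complex.exp_pi_mul_I]
        norm_num
    simp only [hf, Real.rpow_one, one_mul, hexp]
    ring
  rw [hPhi, setIntegral_union hdisj (measurableSet_singleton 1) hint0 hint1,
    hsing 0, hsing 1, hval0, hval1]
  simp only [Complex.real_smul, smul_eq_mul]
  push_cast
  ring

lemma phiP_ne_zero_A (μ : Measure ℝ) [IsFiniteMeasure μ] (R θ : ℝ) (hR : 0 < R)
    (hθ : θ ∈ Set.Icc (-Real.pi) Real.pi)
    (h : (|θ| < Real.pi ∧ 0 < μ (Set.Icc (0:ℝ) 1)) ∨ 0 < μ (Set.Ioo (0:ℝ) 1)) :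
    PhiP μ R θ ≠ 0 := by
  apply phiP_ne_zero_key μ R θ hR hθ
  rcases h with ⟨habs, hpos⟩ | hpos
  · refine hpos.trans_le (measure_mono ?_)
    intro α hα
    exact ⟨cos_aux_pos α θ hα hθ (Or.inl habs), hα⟩
  · refine hpos.trans_le (measure_mono ?_)
    intro α hα
    have hα' : α ∈ Set.Icc (0:ℝ) 1 := ⟨hα.1.le, hα.2.le⟩
    exact ⟨cos_aux_pos α θ hα' hθ (Or.inr hα), hα'⟩

theorem stmt_7 (μσ με : Measure ℝ) [IsFiniteMeasure μσ] [IsFiniteMeasure με]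
    (hσ : μσ ≠ 0) (hε : με ≠ 0)
    (hσsupp : μσ (Set.Icc (0:ℝ) 1)ᶜ = 0) (hεsupp : με (Set.Icc (0:ℝ) 1)ᶜ = 0)
    (hT : TDrestriction μσ με)
    (hproper : 0 < μσ (Set.Ioo (0:ℝ) 1) ∨ 0 < με (Set.Ioo (0:ℝ) 1)) :
    ∀ R : ℝ, 0 < R → ∀ θ ∈ Set.Icc (-Real.pi) Real.pi,
      PhiP μσ R θ ≠ 0 ∧ PhiP με R θ ≠ 0 := by
  intro R hR θ hθ
  have hπ := Real.pi_pos
  -- total mass on [0,1] is positive for both measures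
  have hIccpos : ∀ (μ : Measure ℝ) [IsFiniteMeasure μ], μ ≠ 0 → μ (Set.Icc (0:ℝ) 1)ᶜ = 0 →
      0 < μ (Set.Icc (0:ℝ) 1) := by
    intro μ _ hμ hsupp
    rcases eq_or_lt_of_le (zero_le : (0:ENNReal) ≤ μ (Set.Icc (0:ℝ) 1)) with h | h
    · exfalso
      apply hμ
      have huniv : μ Set.univ = 0 := by
        have := measure_union_le (μ := μ) (Set.Icc (0:ℝ) 1) (Set.Icc (0:ℝ) 1)ᶜ
        rw [Set.union_compl_self, hsupp, ← h] at this
        simpa using this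
      exact Measure.measure_univ_eq_zero.mp huniv
    · exact h
  have hσIcc := hIccpos μσ hσ hσsupp
  have hεIcc := hIccpos με hε hεsupp
  -- mass decomposition estimate: Icc ⊆ {0} ∪ Ioo ∪ {1}
  have hdecomp : ∀ (μ : Measure ℝ), μ (Set.Icc (0:ℝ) 1) ≤
      μ {0} + μ (Set.Ioo (0:ℝ) 1) + μ {1} := by
    intro μ
    calc μ (Set.Icc (0:ℝ) 1) ≤ μ (({0} ∪ Set.Ioo (0:ℝ) 1) ∪ {1}) := by
          apply measure_mono
          intro x ⟨h0, h1⟩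
          rcases eq_or_lt_of_le h0 with h | h
          · exact Or.inl (Or.inl h.symm)
          · rcases eq_or_lt_of_le h1 with h' | h'
            · exact Or.inr h'
            · exact Or.inl (Or.inr ⟨h, h'⟩)
      _ ≤ μ ({0} ∪ Set.Ioo (0:ℝ) 1) + μ {1} := measure_union_le _ _
      _ ≤ μ {0} + μ (Set.Ioo (0:ℝ) 1) + μ {1} := by
          gcongr
          exact measure_union_le _ _
  by_cases hb : |θ| < Real.pi
  · exact ⟨phiP_ne_zero_A μσ R θ hR hθ (Or.inl ⟨hb, hσIcc⟩),
      phiP_ne_zero_A με R θ hR hθ (Or.inl ⟨hb, hεIcc⟩)⟩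
  -- boundary case θ = ±π
  have hθpm : θ = Real.pi ∨ θ = -Real.pi := by
    push_neg at hb
    rcases le_or_gt 0 θ with h | h
    · left; rw [_root_.abs_of_nonneg h] at hb; linarith [hθ.2]
    · right; rw [_root_.abs_of_neg h] at hb; linarith [hθ.1]
  constructor
  · by_cases hσIoo : 0 < μσ (Set.Ioo (0:ℝ) 1)
    · exact phiP_ne_zero_A μσ R θ hR hθ (Or.inr hσIoo)
    · have hσI0 : μσ (Set.Ioo (0:ℝ) 1) = 0 := by
        simpa [pos_iff_ne_zero] using hσIoo
      have hεIoo : 0 < με (Set.Ioo (0:ℝ) 1) := hproper.resolve_left hσIoo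
      -- thermodynamical restriction with E = {1} × (0,1) forces μσ {1} = 0
      have hE := hT (({1} : Set ℝ) ×ˢ Set.Ioo (0:ℝ) 1)
        ((measurableSet_singleton 1).prod measurableSet_Ioo)
        (by rintro ⟨x, y⟩ ⟨hx, hy⟩
            simp only [Set.mem_singleton_iff] at hx
            subst hx
            exact ⟨hy.2, ⟨zero_le_one, le_refl 1⟩, ⟨hy.1.le, hy.2.le⟩⟩)
      rw [Measure.prod_prod, Measure.prod_prod, hσI0, mul_zero] at hE
      have h1 : μσ {1} = 0 := by
        by_contra h
        exact absurd hE (by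
          simp only [not_le]
          exact ENNReal.mul_pos h hεIoo.ne' |>.trans_le le_rfl |> fun hh => hh)
      have h0 : 0 < μσ {0} := by
        by_contra h
        push_neg at h
        have h0' : μσ {0} = 0 := le_antisymm h zero_le
        have := hdecomp μσ
        rw [h0', hσI0, h1] at this
        simp only [add_zero, zero_add] at this
        exact absurd (le_antisymm this zero_le) hσIcc.ne'
      rw [phiP_boundary μσ R θ hR hθpm hσI0, h1]
      simp only [ENNReal.toReal_zero, zero_mul, sub_zero, ne_eq, Complex.ofReal_eq_zero]
      exact (ENNReal.toReal_pos h0.ne' (measure_ne_top μσ _)).ne'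
  · by_cases hεIoo : 0 < με (Set.Ioo (0:ℝ) 1)
    · exact phiP_ne_zero_A με R θ hR hθ (Or.inr hεIoo)
    · have hεI0 : με (Set.Ioo (0:ℝ) 1) = 0 := by
        simpa [pos_iff_ne_zero] using hεIoo
      have hσIoo : 0 < μσ (Set.Ioo (0:ℝ) 1) := hproper.resolve_right hεIoo
      -- thermodynamical restriction with E = (0,1) × {0} forces με {0} = 0
      have hE := hT (Set.Ioo (0:ℝ) 1 ×ˢ ({0} : Set ℝ))
        (measurableSet_Ioo.prod (measurableSet_singleton 0))
        (by rintro ⟨x, y⟩ ⟨hx, hy⟩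
            simp only [Set.mem_singleton_iff] at hy
            subst hy
            exact ⟨hx.1, ⟨hx.1.le, hx.2.le⟩, ⟨le_refl 0, zero_le_one⟩⟩)
      rw [Measure.prod_prod, Measure.prod_prod, hεI0, zero_mul] at hE
      have h0 : με {0} = 0 := by
        by_contra h
        exact absurd hE (by
          simp only [not_le]
          exact ENNReal.mul_pos hσIoo.ne' h)
      have h1 : 0 < με {1} := by
        by_contra h
        push_neg at h
        have h1' : με {1} = 0 := le_antisymm h zero_le
        have := hdecomp με
        rw [h0, hεI0, h1'] at this
        simp only [add_zero, zero_add] at this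
        exact absurd (le_antisymm this zero_le) hεIcc.ne'
      rw [phiP_boundary με R θ hR hθpm hεI0, h0]
      simp only [ENNReal.toReal_zero, zero_sub, ne_eq, Complex.ofReal_eq_zero, neg_eq_zero]
      exact (mul_pos (ENNReal.toReal_pos h1.ne' (measure_ne_top με _)) hR).ne'
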